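/- Let M ≥ 1, C > 0, D > 0, fix m₀ ∈ {1,…,M}, and let λ_a, λ_b ∈ ℝ^M with 0 < λ_b(m) ≤ D for all m. Let λ₀ be a real number and Δ > 0, and for t > 0 let λ_a[t] denote the vector λ_a with its m₀-th entry replaced by t; set p(t) = Q(G(λ_a[t], λ_b)). Assume that for every t ∈ (λ₀ − Δ, λ₀ + Δ): 0 < t ≤ D, 0 < λ_a[t](m) ≤ D for all m, and Σ_{m=1}^M (λ_a[t](m) − λ_b(m))² ≥ C; and assume λ₀ ∈ (λ₀ − Δ, λ₀ + Δ) satisfies these constraints as well. Then for every t ∈ (λ₀ − Δ, λ₀ + Δ), |p(t) − p(λ₀)| ≤ ( 3 e^{−C/(8D)} / √(2π C/D) ) · Δ. -/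

import Mathlib

open Real MeasureTheory

/-- The Gaussian tail function `Q(t) = ∫_t^∞ (1/√(2π)) e^{−x²/2} dx`. -/
noncomputable def gaussQ (t : ℝ) : ℝ :=
  ∫ x in Set.Ici t, (1 / Real.sqrt (2 * π)) * Real.exp (-x ^ 2 / 2)

/-- `G(λ_a, λ_b) = √(∑ (λ_a(m)−λ_b(m))²/(2(λ_a(m)+λ_b(m))))`. -/
noncomputable def Gfun {M : ℕ} (lam_a lam_b : Fin M → ℝ) : ℝ :=
  Real.sqrt (∑ m : Fin M, (lam_a m - lam_b m) ^ 2 / (2 * (lam_a m + lam_b m)))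

lemma gauss_integrable :
    Integrable (fun x : ℝ => (1 / Real.sqrt (2 * π)) * Real.exp (-x ^ 2 / 2)) := by
  have h : Integrable (fun x : ℝ => Real.exp (-(1/2 : ℝ) * x ^ 2)) :=
    integrable_exp_neg_mul_sq (by norm_num)
  have h2 := h.const_mul (1 / Real.sqrt (2 * π))
  convert h2 using 2 with x
  ring_nf

lemma gaussQ_lip_of_le {s a b : ℝ} (hs : 0 ≤ s) (hsb : s ≤ b) (hba : b ≤ a) :
    |gaussQ a - gaussQ b| ≤ 1 / Real.sqrt (2 * π) * Real.exp (-s ^ 2 / 2) * |a - b| := by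
  set φ : ℝ → ℝ := fun x => (1 / Real.sqrt (2 * π)) * Real.exp (-x ^ 2 / 2) with hφ
  have hint : ∀ u : Set ℝ, IntegrableOn φ u := fun u => gauss_integrable.integrableOn
  have hsplit : gaussQ b = (∫ x in Set.Ico b a, φ x) + gaussQ a := by
    have hu := MeasureTheory.setIntegral_union (μ := volume) (f := φ)
      (s := Set.Ico b a) (t := Set.Ici a)
      (Set.disjoint_left.mpr fun x hx hx2 => absurd hx.2 (not_lt.mpr hx2))
      measurableSet_Ici (hint _) (hint _)
    rw [Set.Ico_union_Ici_eq_Ici hba] at hu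
    exact hu
  have hnn : 0 ≤ ∫ x in Set.Ico b a, φ x := by
    apply setIntegral_nonneg measurableSet_Ico
    intro x _
    positivity
  have hub : (∫ x in Set.Ico b a, φ x) ≤ 1 / Real.sqrt (2 * π) * Real.exp (-s ^ 2 / 2) * (a - b) := by
    have := setIntegral_mono_on (hint (Set.Ico b a))
      (integrableOn_const (C := 1 / Real.sqrt (2 * π) * Real.exp (-s ^ 2 / 2)) measure_Ico_lt_top.ne) measurableSet_Ico
      (fun x hx => by
        have hxb : b ≤ x := hx.1
        have : Real.exp (-x ^ 2 / 2) ≤ Real.exp (-s ^ 2 / 2) := by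
          apply Real.exp_le_exp.mpr; nlinarith
        have hc : (0:ℝ) ≤ 1 / Real.sqrt (2 * π) := by positivity
        exact mul_le_mul_of_nonneg_left this hc)
    calc (∫ x in Set.Ico b a, φ x)
        ≤ ∫ _x in Set.Ico b a, (1 / Real.sqrt (2 * π) * Real.exp (-s ^ 2 / 2)) := this
      _ = (volume (Set.Ico b a)).toReal • (1 / Real.sqrt (2 * π) * Real.exp (-s ^ 2 / 2)) :=
          setIntegral_const _
      _ = (a - b) * (1 / Real.sqrt (2 * π) * Real.exp (-s ^ 2 / 2)) := by
          rw [Real.volume_Ico, ENNReal.toReal_ofReal (by linarith)]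
          simp [smul_eq_mul]
      _ = 1 / Real.sqrt (2 * π) * Real.exp (-s ^ 2 / 2) * (a - b) := by ring
  have hdiff : gaussQ b - gaussQ a = ∫ x in Set.Ico b a, φ x := by linarith [hsplit]
  rw [abs_sub_comm]
  rw [abs_of_nonneg (by linarith : (0:ℝ) ≤ gaussQ b - gaussQ a),
      abs_of_nonneg (by linarith : (0:ℝ) ≤ a - b)]
  linarith

lemma gaussQ_lip {s a b : ℝ} (hs : 0 ≤ s) (hsa : s ≤ a) (hsb : s ≤ b) :
    |gaussQ a - gaussQ b| ≤ 1 / Real.sqrt (2 * π) * Real.exp (-s ^ 2 / 2) * |a - b| := by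
  rcases le_total b a with h | h
  · exact gaussQ_lip_of_le hs hsb h
  · rw [abs_sub_comm, abs_sub_comm a b]
    exact gaussQ_lip_of_le hs hsa h

lemma sqrt_lip {L x y : ℝ} (hL : 0 < L) (hx : L ≤ x) (hy : L ≤ y) :
    |Real.sqrt x - Real.sqrt y| ≤ |x - y| / (2 * Real.sqrt L) := by
  have hux : Real.sqrt L ≤ Real.sqrt x := Real.sqrt_le_sqrt hx
  have huy : Real.sqrt L ≤ Real.sqrt y := Real.sqrt_le_sqrt hy
  have hL' : 0 < Real.sqrt L := Real.sqrt_pos.mpr hL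
  have hxx : Real.sqrt x ^ 2 = x := Real.sq_sqrt (by linarith)
  have hyy : Real.sqrt y ^ 2 = y := Real.sq_sqrt (by linarith)
  have key : |x - y| = |Real.sqrt x - Real.sqrt y| * (Real.sqrt x + Real.sqrt y) := by
    have h1 : x - y = (Real.sqrt x - Real.sqrt y) * (Real.sqrt x + Real.sqrt y) := by
      linear_combination hyy - hxx
    rw [h1, abs_mul, abs_of_nonneg (by positivity : (0:ℝ) ≤ Real.sqrt x + Real.sqrt y)]
  rw [le_div_iff₀ (by positivity), key]
  apply mul_le_mul_of_nonneg_left _ (abs_nonneg _)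
  linarith

/-- sensitivity of the threshold-detection error probability
`p(t) = Q(G(λ_a[t], λ_b))` to the imperfectly estimated channel parameter:
under the power constraint (all entries in `(0, D]`) and separation
constraint (`∑ (λ_a[t](m)−λ_b(m))² ≥ C`) throughout `(λ₀−Δ, λ₀+Δ)`,
`|p(t) − p(λ₀)| ≤ (3 e^{−C/(8D)}/√(2πC/D)) Δ` for all `t ∈ (λ₀−Δ, λ₀+Δ)`. -/
theorem stmt16 (M : ℕ) (hM : 1 ≤ M) (C D : ℝ) (hC : 0 < C) (hD : 0 < D)
    (m₀ : Fin M) (lam_a lam_b : Fin M → ℝ)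
    (hb : ∀ m, 0 < lam_b m ∧ lam_b m ≤ D)
    (lam₀ Δ : ℝ) (hΔ : 0 < Δ)
    (p : ℝ → ℝ)
    (hp : ∀ t : ℝ, p t = gaussQ (Gfun (Function.update lam_a m₀ t) lam_b))
    (hconstr : ∀ t ∈ Set.Ioo (lam₀ - Δ) (lam₀ + Δ),
      (0 < t ∧ t ≤ D)
      ∧ (∀ m, 0 < Function.update lam_a m₀ t m
            ∧ Function.update lam_a m₀ t m ≤ D)
      ∧ C ≤ ∑ m : Fin M, (Function.update lam_a m₀ t m - lam_b m) ^ 2)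
    (hlam₀ : lam₀ ∈ Set.Ioo (lam₀ - Δ) (lam₀ + Δ)) :
    ∀ t ∈ Set.Ioo (lam₀ - Δ) (lam₀ + Δ),
      |p t - p lam₀|
        ≤ (3 * Real.exp (-C / (8 * D)) / Real.sqrt (2 * π * C / D)) * Δ := by
  intro t ht
  set I : Set ℝ := Set.Ioo (lam₀ - Δ) (lam₀ + Δ) with hI
  set b₀ : ℝ := lam_b m₀ with hb₀def
  have hb₀pos : 0 < b₀ := (hb m₀).1
  have hb₀D : b₀ ≤ D := (hb m₀).2
  set S : ℝ → ℝ := fun u => ∑ m : Fin M,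
    (Function.update lam_a m₀ u m - lam_b m) ^ 2 /
      (2 * (Function.update lam_a m₀ u m + lam_b m)) with hSdef
  set f : ℝ → ℝ := fun x => (x - b₀) ^ 2 / (2 * (x + b₀)) with hfdef
  -- S u decomposes as f u + constant
  have hSsplit : ∀ u : ℝ, S u = f u + ∑ m ∈ Finset.univ.erase m₀,
      (lam_a m - lam_b m) ^ 2 / (2 * (lam_a m + lam_b m)) := by
    intro u
    have h1 : S u = (Function.update lam_a m₀ u m₀ - lam_b m₀) ^ 2 /
        (2 * (Function.update lam_a m₀ u m₀ + lam_b m₀))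
        + ∑ m ∈ Finset.univ.erase m₀,
          (Function.update lam_a m₀ u m - lam_b m) ^ 2 /
            (2 * (Function.update lam_a m₀ u m + lam_b m)) :=
      (Finset.add_sum_erase Finset.univ _ (Finset.mem_univ m₀)).symm
    rw [h1, Function.update_self]
    congr 1
    apply Finset.sum_congr rfl
    intro m hm
    rw [Function.update_of_ne (Finset.ne_of_mem_erase hm)]
  -- lower bound on S
  have hSlb : ∀ u ∈ I, C / (4 * D) ≤ S u := by
    intro u hu
    obtain ⟨hu1, hu2, hu3⟩ := hconstr u hu
    calc C / (4 * D) ≤ (∑ m : Fin M, (Function.update lam_a m₀ u m - lam_b m) ^ 2) / (4 * D) := by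
          gcongr
      _ = ∑ m : Fin M, (Function.update lam_a m₀ u m - lam_b m) ^ 2 / (4 * D) :=
          Finset.sum_div _ _ _
      _ ≤ S u := by
          apply Finset.sum_le_sum
          intro m _
          have h1 := (hu2 m).1
          have h2 := (hu2 m).2
          have h3 := (hb m).1
          have h4 := (hb m).2
          exact div_le_div_of_nonneg_left (by positivity) (by positivity) (by linarith)
  -- MVT bound: |f t - f lam₀| ≤ (3/2)|t - lam₀|
  set f' : ℝ → ℝ := fun x =>
    (2 * (x - b₀) * (2 * (x + b₀)) - (x - b₀) ^ 2 * 2) / (2 * (x + b₀)) ^ 2 with hf'def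
  have hderiv : ∀ x ∈ I, HasDerivWithinAt f (f' x) I x := by
    intro x hx
    have hxpos : 0 < x := (hconstr x hx).1.1
    have hu : HasDerivAt (fun y : ℝ => (y - b₀) ^ 2) (2 * (x - b₀)) x := by
      simpa [Pi.pow_def] using ((hasDerivAt_id x).sub_const b₀).pow 2
    have hv : HasDerivAt (fun y : ℝ => 2 * (y + b₀)) 2 x := by
      simpa using ((hasDerivAt_id x).add_const b₀).const_mul 2
    have hne : 2 * (x + b₀) ≠ 0 := by positivity
    exact (hu.div hv hne).hasDerivWithinAt
  have hbound : ∀ x ∈ I, ‖f' x‖ ≤ 3 / 2 := by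
    intro x hx
    have hxpos : 0 < x := (hconstr x hx).1.1
    have hspos : 0 < x + b₀ := by linarith
    rw [hf'def]
    simp only [Real.norm_eq_abs]
    rw [abs_div, abs_of_nonneg (by positivity : (0:ℝ) ≤ (2 * (x + b₀)) ^ 2),
        div_le_iff₀ (by positivity)]
    rw [abs_le]
    constructor <;> nlinarith [abs_nonneg (2 * (x - b₀) * (2 * (x + b₀)) - (x - b₀) ^ 2 * 2),
      le_abs_self (2 * (x - b₀) * (2 * (x + b₀)) - (x - b₀) ^ 2 * 2),
      neg_abs_le (2 * (x - b₀) * (2 * (x + b₀)) - (x - b₀) ^ 2 * 2), sq_nonneg (x - b₀),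
      sq_nonneg (x + b₀)]
  have hmvt : |f t - f lam₀| ≤ 3 / 2 * |t - lam₀| := by
    have := (convex_Ioo (lam₀ - Δ) (lam₀ + Δ)).norm_image_sub_le_of_norm_hasDerivWithin_le
      hderiv hbound hlam₀ ht
    simpa [Real.norm_eq_abs] using this
  have htΔ : |t - lam₀| ≤ Δ := by
    rw [abs_le]; constructor <;> [linarith [ht.1]; linarith [ht.2]]
  have hSd : |S t - S lam₀| ≤ 3 / 2 * Δ := by
    rw [hSsplit t, hSsplit lam₀]
    calc |f t + (∑ m ∈ Finset.univ.erase m₀,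
          (lam_a m - lam_b m) ^ 2 / (2 * (lam_a m + lam_b m)))
        - (f lam₀ + ∑ m ∈ Finset.univ.erase m₀,
          (lam_a m - lam_b m) ^ 2 / (2 * (lam_a m + lam_b m)))| = |f t - f lam₀| := by
          congr 1
          ring
      _ ≤ 3 / 2 * |t - lam₀| := hmvt
      _ ≤ 3 / 2 * Δ := by nlinarith
  -- G values
  set s₀ : ℝ := Real.sqrt (C / (4 * D)) with hs₀def
  have hs₀pos : 0 < s₀ := Real.sqrt_pos.mpr (by positivity)
  have hGdef : ∀ u : ℝ, Gfun (Function.update lam_a m₀ u) lam_b = Real.sqrt (S u) := fun u => rfl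
  have hGlb : ∀ u ∈ I, s₀ ≤ Gfun (Function.update lam_a m₀ u) lam_b := by
    intro u hu
    rw [hGdef]
    exact Real.sqrt_le_sqrt (hSlb u hu)
  have hGd : |Gfun (Function.update lam_a m₀ t) lam_b - Gfun (Function.update lam_a m₀ lam₀) lam_b|
      ≤ (3 / 2 * Δ) / (2 * s₀) := by
    rw [hGdef, hGdef]
    calc |Real.sqrt (S t) - Real.sqrt (S lam₀)| ≤ |S t - S lam₀| / (2 * s₀) :=
          sqrt_lip (by positivity) (hSlb t ht) (hSlb lam₀ hlam₀)
      _ ≤ (3 / 2 * Δ) / (2 * s₀) := by gcongr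
  have hlip := gaussQ_lip (s := s₀) hs₀pos.le (hGlb t ht) (hGlb lam₀ hlam₀)
  rw [hp t, hp lam₀]
  have hexp : Real.exp (-s₀ ^ 2 / 2) = Real.exp (-C / (8 * D)) := by
    rw [hs₀def, Real.sq_sqrt (by positivity : (0:ℝ) ≤ C / (4 * D))]
    congr 1
    ring
  have hA : Real.sqrt (2 * π * C / D) = 2 * s₀ * Real.sqrt (2 * π) := by
    have h2π : (0:ℝ) < 2 * π := by positivity
    have hsq : (2 * s₀ * Real.sqrt (2 * π)) ^ 2 = 2 * π * C / D := by
      have h1 : s₀ ^ 2 = C / (4 * D) := Real.sq_sqrt (by positivity)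
      have h2 : Real.sqrt (2 * π) ^ 2 = 2 * π := Real.sq_sqrt h2π.le
      calc (2 * s₀ * Real.sqrt (2 * π)) ^ 2 = 4 * s₀ ^ 2 * Real.sqrt (2 * π) ^ 2 := by ring
        _ = 4 * (C / (4 * D)) * (2 * π) := by rw [h1, h2]
        _ = 2 * π * C / D := by field_simp
    rw [← hsq, Real.sqrt_sq (by positivity)]
  calc |gaussQ (Gfun (Function.update lam_a m₀ t) lam_b)
        - gaussQ (Gfun (Function.update lam_a m₀ lam₀) lam_b)|
      ≤ 1 / Real.sqrt (2 * π) * Real.exp (-s₀ ^ 2 / 2)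
        * |Gfun (Function.update lam_a m₀ t) lam_b
            - Gfun (Function.update lam_a m₀ lam₀) lam_b| := hlip
    _ ≤ 1 / Real.sqrt (2 * π) * Real.exp (-s₀ ^ 2 / 2) * ((3 / 2 * Δ) / (2 * s₀)) := by
        gcongr
    _ = 3 * Real.exp (-C / (8 * D)) / (2 * Real.sqrt (2 * π * C / D)) * Δ := by
        rw [hexp, hA]
        have hπ : Real.sqrt (2 * π) ≠ 0 := ne_of_gt (Real.sqrt_pos.mpr (by positivity))
        have hs : s₀ ≠ 0 := ne_of_gt hs₀pos
        field_simp
    _ ≤ 3 * Real.exp (-C / (8 * D)) / Real.sqrt (2 * π * C / D) * Δ := by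
        have hX : (0:ℝ) < Real.sqrt (2 * π * C / D) := Real.sqrt_pos.mpr (by positivity)
        apply mul_le_mul_of_nonneg_right _ hΔ.le
        exact div_le_div_of_nonneg_left (by positivity) hX (by linarith)
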